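/- Let W be a discrete valuation ring with uniformizer p, and let N ⊆ M be finitely generated W-modules. Then N is a direct summand of M if and only if N ∩ p^k M = p^k N for all k ∈ ℕ. -/

import Mathlib

open Submodule DirectSum

theorem mem_span_singleton_smul' {W M : Type*} [CommRing W] [AddCommGroup M] [Module W M]
    (a : W) (N : Submodule W M) (x : M) :
    x ∈ Ideal.span {a} • N ↔ ∃ n ∈ N, x = a • n := by
  constructor
  · intro hx
    refine Submodule.smul_induction_on hx ?_ ?_
    · rintro r hr n hn
      obtain ⟨c, rfl⟩ := Ideal.mem_span_singleton'.mp hr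
      exact ⟨c • n, N.smul_mem c hn, by rw [smul_smul, mul_comm]⟩
    · rintro x y ⟨n, hn, rfl⟩ ⟨m, hm, rfl⟩
      exact ⟨n + m, add_mem hn hm, by rw [smul_add]⟩
  · rintro ⟨n, hn, rfl⟩
    exact Submodule.smul_mem_smul (Ideal.mem_span_singleton_self a) hn

theorem isCompl_of_section' {W M Q : Type*} [CommRing W] [AddCommGroup M] [Module W M]
    [AddCommGroup Q] [Module W Q] (f : M →ₗ[W] Q) (s : Q →ₗ[W] M)
    (h : ∀ q, f (s q) = q) : IsCompl (LinearMap.ker f) (LinearMap.range s) := by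
  constructor
  · rw [disjoint_def]
    rintro x hx ⟨q, rfl⟩
    have hq : q = 0 := by rw [← h q]; exact hx
    rw [hq, map_zero]
  · rw [codisjoint_iff, eq_top_iff]
    intro m _
    have h1 : m - s (f m) ∈ LinearMap.ker f := by simp [h]
    have h2 : m = (m - s (f m)) + s (f m) := by abel
    rw [h2]
    exact add_mem (mem_sup_left h1) (mem_sup_right ⟨f m, rfl⟩)

universe u v

theorem exists_isCompl_of_pure {W : Type u} [CommRing W] [IsDomain W] [IsDiscreteValuationRing W]
    (p : W) (hp : Irreducible p)
    {M : Type v} [AddCommGroup M] [Module W M] [Module.Finite W M]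
    (N : Submodule W M)
    (hpure : ∀ k : ℕ, N ⊓ (Ideal.span {p} ^ k) • (⊤ : Submodule W M) =
        (Ideal.span {p} ^ k) • N) :
    ∃ N' : Submodule W M, IsCompl N N' := by
  haveI : Module.Finite W (M ⧸ N) := Module.Finite.of_surjective N.mkQ N.mkQ_surjective
  haveI : Module.Finite W (ULift.{u} (M ⧸ N)) :=
    Module.Finite.equiv ULift.moduleEquiv.symm
  obtain ⟨n, ι, fι, q, hq, e, ⟨φ'⟩⟩ :=
    Module.equiv_free_prod_directSum (R := W) (M := ULift.{u} (M ⧸ N))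
  haveI : DecidableEq ι := Classical.decEq ι
  let φ : (M ⧸ N) ≃ₗ[W] (Fin n →₀ W) × ⨁ i : ι, W ⧸ (W ∙ q i ^ e i) :=
    ULift.moduleEquiv.symm.trans φ'
  -- lifts of free generators
  have hfree : ∀ i : Fin n, ∃ x : M, N.mkQ x = φ.symm (Finsupp.single i 1, 0) :=
    fun i => N.mkQ_surjective _
  choose mfree hmfree using hfree
  -- lifts of torsion generators, killed by the same power
  have htor : ∀ i : ι, ∃ x : M, q i ^ e i • x = 0 ∧
      N.mkQ x = φ.symm (0, DirectSum.lof W ι _ i (Submodule.Quotient.mk 1)) := by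
    intro i
    obtain ⟨x, hx⟩ := N.mkQ_surjective (φ.symm (0, DirectSum.lof W ι _ i
      (Submodule.Quotient.mk 1)))
    have h0 : (q i ^ e i) • (Submodule.Quotient.mk (1 : W) : W ⧸ W ∙ q i ^ e i) = 0 := by
      rw [← Submodule.Quotient.mk_smul, Submodule.Quotient.mk_eq_zero]
      simpa using Submodule.mem_span_singleton_self _
    have hkill : q i ^ e i • (φ.symm (0, DirectSum.lof W ι _ i
        (Submodule.Quotient.mk (1 : W)))) = 0 := by
      rw [← map_smul, Prod.smul_mk, smul_zero, ← map_smul, h0, map_zero]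
      simp
    have hmem : q i ^ e i • x ∈ N := by
      rw [← Submodule.ker_mkQ N, LinearMap.mem_ker, map_smul, hx, hkill]
    have hspan : Ideal.span {q i ^ e i} = Ideal.span {p ^ e i} :=
      Ideal.span_singleton_eq_span_singleton.mpr
        ((IsDiscreteValuationRing.associated_of_irreducible W (hq i) hp).pow_pow)
    have hmem2 : q i ^ e i • x ∈ Ideal.span {p} ^ e i • (⊤ : Submodule W M) := by
      rw [Ideal.span_singleton_pow, ← hspan]
      exact (mem_span_singleton_smul' _ _ _).mpr ⟨x, trivial, rfl⟩
    have hmem3 := hpure (e i) ▸ Submodule.mem_inf.mpr ⟨hmem, hmem2⟩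
    rw [Ideal.span_singleton_pow, ← hspan] at hmem3
    obtain ⟨nn, hnn, heq⟩ := (mem_span_singleton_smul' _ _ _).mp hmem3
    refine ⟨x - nn, ?_, ?_⟩
    · rw [smul_sub, ← heq, sub_self]
    · rw [map_sub, hx]
      have : N.mkQ nn = 0 := by rwa [← LinearMap.mem_ker, Submodule.ker_mkQ]
      rw [this, sub_zero]
  choose xtor hxtor1 hxtor2 using htor
  -- build the section
  let ψ : ∀ i : ι, (W ⧸ (W ∙ q i ^ e i)) →ₗ[W] M := fun i =>
    Submodule.liftQSpanSingleton (q i ^ e i) (LinearMap.toSpanSingleton W M (xtor i))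
      (by simpa [LinearMap.toSpanSingleton_apply] using hxtor1 i)
  let g : ((Fin n →₀ W) × ⨁ i : ι, W ⧸ (W ∙ q i ^ e i)) →ₗ[W] M :=
    LinearMap.coprod (Finsupp.linearCombination W mfree) (DirectSum.toModule W ι M ψ)
  have hkey : N.mkQ.comp g = (φ.symm : _ →ₗ[W] M ⧸ N) := by
    ext i
    · simpa [g] using hmfree i
    · have h3 : (ψ i) 1 = xtor i := by
        show (ψ i) (Submodule.Quotient.mk 1) = xtor i
        rw [Submodule.liftQSpanSingleton_apply, LinearMap.toSpanSingleton_apply, one_smul]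
      simpa [g] using (congrArg N.mkQ h3).trans (hxtor2 i)
  let s : (M ⧸ N) →ₗ[W] M := g.comp (φ : (M ⧸ N) →ₗ[W] _)
  have hs : ∀ y : M ⧸ N, N.mkQ (s y) = y := by
    intro y
    have h1 := LinearMap.congr_fun hkey (φ y)
    simp only [LinearMap.comp_apply, LinearEquiv.coe_coe] at h1
    simpa [s] using h1.trans (φ.symm_apply_apply y)
  refine ⟨LinearMap.range s, ?_⟩
  have := isCompl_of_section' N.mkQ s hs
  rwa [Submodule.ker_mkQ] at this

theorem isDirectSummand_iff_inf_smul
    {W : Type*} [CommRing W] [IsDomain W] [IsDiscreteValuationRing W]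
    (p : W) (hp : Irreducible p)
    {M : Type*} [AddCommGroup M] [Module W M] [Module.Finite W M]
    (N : Submodule W M) :
    (∃ N' : Submodule W M, IsCompl N N') ↔
      ∀ k : ℕ, N ⊓ (Ideal.span {p} ^ k) • (⊤ : Submodule W M) =
        (Ideal.span {p} ^ k) • N := by
  constructor
  · rintro ⟨N', hc⟩ k
    refine le_antisymm ?_ (le_inf Submodule.smul_le_right (Submodule.smul_mono le_rfl le_top))
    rintro x ⟨hxN, hxM⟩
    rw [Ideal.span_singleton_pow] at hxM ⊢
    obtain ⟨m, -, rfl⟩ := (mem_span_singleton_smul' _ _ _).mp hxM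
    obtain ⟨v, hv, w, hw, hvw⟩ := Submodule.mem_sup.mp
      (show m ∈ N ⊔ N' by rw [hc.codisjoint.eq_top]; trivial)
    have hw0 : p ^ k • w = 0 := by
      have h1 : p ^ k • w ∈ N := by
        have h2 : p ^ k • w = p ^ k • m - p ^ k • v := by rw [← hvw, ← smul_sub, add_sub_cancel_left]
        rw [h2]
        exact sub_mem hxN (N.smul_mem _ hv)
      exact (Submodule.disjoint_def.mp hc.disjoint) _ h1 (N'.smul_mem _ hw)
    refine (mem_span_singleton_smul' _ _ _).mpr ⟨v, hv, ?_⟩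
    rw [← hvw, smul_add, hw0, add_zero]
  · exact exists_isCompl_of_pure p hp N
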